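/- Suppose n is odd. Then the set of values x^(σ^(n−1)−σ) as x ranges over the nonzero elements of K equals the set of all y ∈ K with N(y) = 1. -/

import Mathlib

/-- A common divisor of `q^t - 1` and `q^n - 1` with coprime exponents divides `q - 1`. -/
lemma aux_dvd_sub_one (q t n d : ℕ) (hq : 2 ≤ q) (ht : 0 < t) (htn : Nat.Coprime t n)
    (h1 : d ∣ q ^ t - 1) (h2 : d ∣ q ^ n - 1) : d ∣ q - 1 := by
  have hd0 : d ≠ 0 := by
    rintro rfl
    have h3 : q ^ t - 1 = 0 := Nat.eq_zero_of_zero_dvd h1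
    have h4 : q ≤ q ^ t := Nat.le_self_pow (by omega) q
    omega
  haveI : NeZero d := ⟨hd0⟩
  have key : ∀ m : ℕ, d ∣ q ^ m - 1 → (q : ZMod d) ^ m = 1 := by
    intro m hm
    have h1m : 1 ≤ q ^ m := Nat.one_le_pow _ _ (by omega)
    have h5 : ((q ^ m : ℕ) : ZMod d) = (((q ^ m - 1) + 1 : ℕ) : ZMod d) := by
      congr 1; omega
    rwa [Nat.cast_pow, Nat.cast_add, Nat.cast_one,
      (ZMod.natCast_eq_zero_iff _ _).mpr hm, zero_add] at h5
  have hq1 : (q : ZMod d) = 1 := by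
    have h6 := pow_gcd_eq_one.mpr ⟨key t h1, key n h2⟩
    rwa [htn, pow_one] at h6
  have h7 : ((q - 1 : ℕ) : ZMod d) = 0 := by
    rw [Nat.cast_sub (by omega), hq1, Nat.cast_one, sub_self]
  exact (ZMod.natCast_eq_zero_iff _ _).mp h7

/-- For odd `n`, the values `x^(σ^(n-1) - σ)`, `x ≠ 0`, are exactly the
elements of norm one. -/
theorem stmt_12 (q n s : ℕ) (hq : IsPrimePow q) (hn : 3 ≤ n) (hodd : Odd n)
    (hs : 0 < s) (hsn : Nat.Coprime s n) (K : Type*) [Field K] [Fintype K]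
    (hK : Fintype.card K = q ^ n) :
    (fun x : K => x ^ ((q ^ s) ^ (n - 1) - q ^ s)) '' {x : K | x ≠ 0} =
      {y : K | y ^ ((q ^ n - 1) / (q - 1)) = 1} := by
  have hq2 : 2 ≤ q := hq.two_le
  set e : ℕ := (q ^ s) ^ (n - 1) - q ^ s with he
  set N : ℕ := q ^ n - 1 with hN
  set m : ℕ := N / (q - 1) with hm
  have hqn2 : 2 ≤ q ^ n := le_trans hq2 (Nat.le_self_pow (by omega) q)
  -- e = q^s * (q^(s*(n-2)) - 1)
  have hefac : e = q ^ s * (q ^ (s * (n - 2)) - 1) := by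
    have h1 : (q ^ s) ^ (n - 1) = q ^ s * (q ^ s) ^ (n - 2) := by
      rw [← pow_succ']
      congr 1
      omega
    rw [he, h1, Nat.mul_sub, mul_one, ← pow_mul]
  have hdvd : ∀ k : ℕ, q - 1 ∣ q ^ k - 1 := fun k => by
    simpa only [one_pow] using Nat.sub_dvd_pow_sub_pow q 1 k
  have hq1N : q - 1 ∣ N := hdvd n
  have hmN : (q - 1) * m = N := Nat.mul_div_cancel' hq1N
  have hm0 : m ≠ 0 := by
    rintro h; rw [h, mul_zero] at hmN; omega
  have hq1e : q - 1 ∣ e := hefac ▸ Dvd.dvd.mul_left (hdvd _) _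
  -- coprimality of s*(n-2) and n
  have hcop : Nat.Coprime (s * (n - 2)) n := by
    apply Nat.Coprime.mul hsn
    have h2 : Nat.Coprime (n - 2) 2 := Nat.coprime_two_right.mpr (by
      obtain ⟨k, hk⟩ := hodd; exact ⟨k - 1, by omega⟩)
    have h3 : Nat.Coprime (n - 2) (2 + (n - 2)) := Nat.coprime_add_self_right.mpr h2
    rwa [show 2 + (n - 2) = n by omega] at h3
  -- gcd e N divides q - 1
  have hgcd : Nat.gcd e N ∣ q - 1 := by
    have hdN : Nat.gcd e N ∣ N := Nat.gcd_dvd_right _ _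
    have hde : Nat.gcd e N ∣ e := Nat.gcd_dvd_left _ _
    have hcq : Nat.Coprime q N := by
      have h4 : Nat.gcd q N ∣ 1 := by
        have h1 : Nat.gcd q N ∣ q ^ n := (Nat.gcd_dvd_left _ _).trans (dvd_pow_self q (by omega))
        have h2 : Nat.gcd q N ∣ q ^ n - 1 := Nat.gcd_dvd_right _ _
        have h3 := Nat.dvd_sub h1 h2
        rwa [show q ^ n - (q ^ n - 1) = 1 by omega] at h3
      exact Nat.eq_one_of_dvd_one h4
    have hcq' : Nat.Coprime (q ^ s) (Nat.gcd e N) :=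
      Nat.Coprime.pow_left _ (hcq.coprime_dvd_right hdN)
    have hde2 : Nat.gcd e N ∣ q ^ s * (q ^ (s * (n - 2)) - 1) := by
      rw [← hefac]; exact hde
    have hdt : Nat.gcd e N ∣ q ^ (s * (n - 2)) - 1 :=
      hcq'.symm.dvd_of_dvd_mul_left hde2
    exact aux_dvd_sub_one q (s * (n - 2)) n _ hq2 (Nat.mul_pos hs (by omega)) hcop hdt hdN
  ext y
  simp only [Set.mem_image, Set.mem_setOf_eq]
  constructor
  · rintro ⟨x, hx, rfl⟩
    obtain ⟨c, hc⟩ := hq1e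
    have hxN : x ^ N = 1 := by
      rw [hN, ← hK]
      exact FiniteField.pow_card_sub_one_eq_one x hx
    rw [← pow_mul, hc, mul_comm (q - 1) c, mul_assoc, hmN, mul_comm c N, pow_mul, hxN, one_pow]
  · intro hy
    have hy0 : y ≠ 0 := by
      rintro rfl
      rw [zero_pow hm0] at hy
      exact zero_ne_one hy
    set u : Kˣ := Units.mk0 y hy0 with hu
    obtain ⟨g, hg⟩ := IsCyclic.exists_generator (α := Kˣ)
    have hog : orderOf g = N := by
      rw [orderOf_eq_card_of_forall_mem_zpowers hg, Nat.card_units, Nat.card_eq_fintype_card, hK]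
    obtain ⟨k, hk⟩ := Subgroup.mem_zpowers_iff.mp (hg u)
    have hum : u ^ m = 1 := by
      ext
      rw [Units.val_pow_eq_pow_val, hu, Units.val_mk0, hy, Units.val_one]
    have hNdvd : (N : ℤ) ∣ k * m := by
      rw [← hog, orderOf_dvd_iff_zpow_eq_one, zpow_mul, hk, zpow_natCast, hum]
    have hq1k : ((q : ℤ) - 1) ∣ k := by
      have hNm : (N : ℤ) = ((q : ℤ) - 1) * m := by
        rw [← hmN]
        push_cast [Nat.cast_sub (show 1 ≤ q by omega)]
        ring
      obtain ⟨t, ht⟩ := hNdvd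
      refine ⟨t, ?_⟩
      have hmz : (m : ℤ) ≠ 0 := by exact_mod_cast hm0
      have h8 : k * m = (((q : ℤ) - 1) * t) * m := by rw [ht, hNm]; ring
      exact mul_right_cancel₀ hmz h8
    obtain ⟨c, hc⟩ := hq1k
    obtain ⟨c2, hc2⟩ := hgcd
    set A : ℤ := Nat.gcdA e N with hA
    have hbez : (Nat.gcd e N : ℤ) = e * A + N * Nat.gcdB e N := Nat.gcd_eq_gcd_ab e N
    have hgN : g ^ (N : ℤ) = 1 := by
      rw [zpow_natCast, ← hog, pow_orderOf_eq_one]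
    have hgd : g ^ ((e : ℤ) * A) = g ^ ((Nat.gcd e N : ℤ)) := by
      rw [hbez, zpow_add, zpow_mul (g) (N : ℤ), hgN, one_zpow, mul_one]
    have hq1c : ((q : ℤ) - 1) = (Nat.gcd e N : ℤ) * (c2 : ℤ) := by
      zify [show 1 ≤ q by omega] at hc2
      exact_mod_cast hc2
    set w : Kˣ := g ^ (A * c2 * c) with hw
    have key : w ^ e = u := by
      rw [hw, ← zpow_natCast (g ^ (A * c2 * c)) e, ← zpow_mul,
        show (A * c2 * c) * (e : ℤ) = ((e : ℤ) * A) * (c2 * c) by ring,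
        zpow_mul, hgd, ← zpow_mul,
        show (Nat.gcd e N : ℤ) * (c2 * c) = ((Nat.gcd e N : ℤ) * c2) * c by ring,
        ← hq1c, ← hc, hk]
    refine ⟨(w : K), Units.ne_zero _, ?_⟩
    rw [← Units.val_pow_eq_pow_val, key, hu, Units.val_mk0]
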